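/- Let A be a PD_3 algebra over a field k of characteristic ≠ 2 whose 3-form μ_A has maximal rank n = dim A^1 ≥ 3 (i.e., μ_A does not factor through any proper quotient ∧^3 W with W ⊊ A^1). Then R^1_{n-2}(A) = R^1_{n-1}(A) = R^1_n(A) = {0}. -/

import Mathlib

open Module LinearMap

/-- The differential `δ_a^i : A^i → A^{i+1}`, left multiplication by `a ∈ A^1`. -/
def gdelta {K R : Type*} [Field K] [Ring R] [Algebra K R]
    (𝒜 : ℕ → Submodule K R) [GradedRing 𝒜] (a : 𝒜 1) (i : ℕ) :
    𝒜 i →ₗ[K] 𝒜 (i + 1) where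
  toFun u := ⟨(a : R) * (u : R), by
    simpa [add_comm] using SetLike.mul_mem_graded a.2 u.2⟩
  map_add' u v := by ext; simp [mul_add]
  map_smul' c u := by ext; simp [mul_smul_comm]

/-- `dim H^i(A, δ_a)`: the dimension of the degree-`i` cohomology of `(A, δ_a)`. -/
noncomputable def hdim {K R : Type*} [Field K] [Ring R] [Algebra K R]
    (𝒜 : ℕ → Submodule K R) [GradedRing 𝒜] (a : 𝒜 1) : ℕ → ℕ
  | 0 => finrank K (LinearMap.ker (gdelta 𝒜 a 0))
  | (i + 1) => finrank K (LinearMap.ker (gdelta 𝒜 a (i + 1)))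
      - finrank K (LinearMap.range (gdelta 𝒜 a i))

/-- The resonance variety `R^i_k(A) ⊆ A^1`. -/
noncomputable def resSet {K R : Type*} [Field K] [Ring R] [Algebra K R]
    (𝒜 : ℕ → Submodule K R) [GradedRing 𝒜] (i k : ℕ) : Set (𝒜 1) :=
  {a | k ≤ hdim 𝒜 a i}



/-- Auxiliary: a nondegenerate-at-a-point alternating form has kernel of codimension ≥ 2. -/
lemma alt_ker_codim_two {K V : Type*} [Field K] [AddCommGroup V] [Module K V]
    [FiniteDimensional K V] (B : V →ₗ[K] V →ₗ[K] K) (halt : ∀ v, B v v = 0)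
    {b c : V} (hbc : B b c ≠ 0) :
    finrank K (LinearMap.ker B) + 2 ≤ finrank K V := by
  have hskew : ∀ x y : V, B x y = - B y x := by
    intro x y
    have h := halt (x + y)
    simp only [map_add, LinearMap.add_apply, halt x, halt y] at h
    linear_combination h
  have hcb : B c b ≠ 0 := by rw [hskew]; simpa using hbc
  have key : ∀ s t : K, s • b + t • c ∈ LinearMap.ker B → s = 0 ∧ t = 0 := by
    intro s t h
    rw [LinearMap.mem_ker] at h
    have h1 : s * B b c = 0 := by
      have := congrArg (fun f : V →ₗ[K] K => f c) h
      simpa [halt c, smul_eq_mul] using this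
    have h2 : t * B c b = 0 := by
      have := congrArg (fun f : V →ₗ[K] K => f b) h
      simpa [halt b, smul_eq_mul] using this
    exact ⟨by simpa [hbc] using mul_eq_zero.mp h1, by simpa [hcb] using mul_eq_zero.mp h2⟩
  have hli : LinearIndependent K ![b, c] :=
    LinearIndependent.pair_iff.mpr fun s t hst => key s t (by simp [hst])
  have hinf : LinearMap.ker B ⊓ Submodule.span K {b, c} = ⊥ := by
    rw [eq_bot_iff]
    rintro x ⟨hx1, hx2⟩
    obtain ⟨s, t, rfl⟩ := Submodule.mem_span_pair.mp hx2
    obtain ⟨rfl, rfl⟩ := key s t hx1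
    simp
  have hspan : finrank K (Submodule.span K ({b, c} : Set V)) = 2 := by
    have : Set.range ![b, c] = ({b, c} : Set V) := by
      simp [Matrix.range_cons, Matrix.range_empty, Set.pair_comm]
    rw [← this, finrank_span_eq_card hli]
    simp
  have := Submodule.finrank_sup_add_finrank_inf_eq (LinearMap.ker B)
    (Submodule.span K ({b, c} : Set V))
  rw [hinf, hspan] at this
  simp only [finrank_bot, add_zero] at this
  calc finrank K (LinearMap.ker B) + 2 = _ := this.symm
    _ ≤ finrank K V := Submodule.finrank_le _

/-- The bilinear form `(b, c) ↦ ε (a b c)` on `A¹`. -/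
noncomputable def triForm {K R : Type*} [Field K] [Ring R] [Algebra K R]
    (𝒜 : ℕ → Submodule K R) (ε : R →ₗ[K] K) (a : 𝒜 1) :
    𝒜 1 →ₗ[K] 𝒜 1 →ₗ[K] K :=
  LinearMap.mk₂ K (fun b c => ε ((a : R) * b * c))
    (fun b b' c => by simp only [Submodule.coe_add, mul_add, add_mul, map_add])
    (fun t b c => by simp only [SetLike.val_smul, mul_smul_comm, smul_mul_assoc, map_smul])
    (fun b c c' => by simp only [Submodule.coe_add, mul_add, map_add])
    (fun t b c => by simp only [SetLike.val_smul, mul_smul_comm, map_smul])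

/-- If the 3-form `μ_A` of a `PD_3` algebra `A` has maximal rank
`n = dim A^1 ≥ 3` (no nonzero `v ∈ A^1` with `μ_A(v∧b∧c) = 0` for all `b, c`), then the
bottom resonance varieties vanish: `R^1_{n-2}(A) = R^1_{n-1}(A) = R^1_n(A) = {0}`. -/
theorem pd3_bottom_resonance_vanishes
    {K R : Type*} [Field K] [Ring R] [Algebra K R]
    (𝒜 : ℕ → Submodule K R) [GradedRing 𝒜]
    (hcomm : ∀ (i j : ℕ) (x y : R), x ∈ 𝒜 i → y ∈ 𝒜 j →
      x * y = (-1 : R) ^ (i * j) * (y * x))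
    (hconn : ∀ x ∈ 𝒜 0, ∃ c : K, x = algebraMap K R c)
    (hfin : ∀ i, FiniteDimensional K (𝒜 i))
    (hchar : (2 : K) ≠ 0)
    (ε : R →ₗ[K] K)
    (hPD : ∀ (i : ℕ) (x : R), x ∈ 𝒜 i →
      (∀ (j : ℕ) (y : R), y ∈ 𝒜 j → i + j = 3 → ε (x * y) = 0) → x = 0)
    (n : ℕ) (hn : n = finrank K (𝒜 1)) (hn3 : 3 ≤ n)
    (hmaxrank : ∀ v ∈ 𝒜 1, (∀ b ∈ 𝒜 1, ∀ c ∈ 𝒜 1, ε (v * b * c) = 0) → v = 0) :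
    resSet 𝒜 1 (n - 2) = {0} ∧ resSet 𝒜 1 (n - 1) = {0} ∧ resSet 𝒜 1 n = {0} := by
  haveI : ∀ i, FiniteDimensional K (𝒜 i) := hfin
  -- squares of degree-one elements vanish
  have hsq : ∀ x : R, x ∈ 𝒜 1 → x * x = 0 := by
    intro x hx
    have h := hcomm 1 1 x x hx hx
    simp only [mul_one, pow_one, neg_one_mul] at h
    have h2 : (2 : K) • (x * x) = 0 := by
      rw [two_smul]
      exact add_eq_zero_iff_eq_neg.mpr h
    have := congrArg (fun y : R => (2 : K)⁻¹ • y) h2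
    simpa [smul_smul, inv_mul_cancel₀ hchar] using this
  -- hdim at degree 1 unfolds
  have hdeq : ∀ a : 𝒜 1, hdim 𝒜 a 1 =
      finrank K (LinearMap.ker (gdelta 𝒜 a 1)) -
      finrank K (LinearMap.range (gdelta 𝒜 a 0)) := fun a => rfl
  -- hdim at 0 is n
  have hd0 : hdim 𝒜 (0 : 𝒜 1) 1 = n := by
    have hg : ∀ i, gdelta 𝒜 (0 : 𝒜 1) i = 0 := by
      intro i; ext u; simp [gdelta]
    rw [hdeq, hg, hg, LinearMap.ker_zero, LinearMap.range_zero, finrank_bot, finrank_top, hn]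
    exact Nat.sub_zero _
  -- hdim of nonzero elements
  have hmain : ∀ a : 𝒜 1, a ≠ 0 → hdim 𝒜 a 1 < n - 2 := by
    intro a ha
    set B := triForm 𝒜 ε a with hB
    have hBapp : ∀ b c : 𝒜 1, B b c = ε ((a : R) * b * c) := fun b c => rfl
    -- B is alternating
    have halt : ∀ b : 𝒜 1, B b b = 0 := by
      intro b
      rw [hBapp, mul_assoc, hsq (b : R) b.2, mul_zero, map_zero]
    -- B is not identically zero
    obtain ⟨b, c, hbc⟩ : ∃ b c : 𝒜 1, B b c ≠ 0 := by
      by_contra h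
      push_neg at h
      apply ha
      apply Subtype.ext
      refine hmaxrank (a : R) a.2 fun x hx y hy => ?_
      simpa [hBapp] using h ⟨x, hx⟩ ⟨y, hy⟩
    -- kernel of δ_a^1 is contained in kernel of B
    have hker : LinearMap.ker (gdelta 𝒜 a 1) ≤ LinearMap.ker B := by
      intro x hx
      rw [LinearMap.mem_ker] at hx ⊢
      have hx' : (a : R) * x = 0 := congrArg Subtype.val hx
      ext y
      simp [hBapp, hx']
    have h1 : finrank K (LinearMap.ker (gdelta 𝒜 a 1)) + 2 ≤ n := by
      calc finrank K (LinearMap.ker (gdelta 𝒜 a 1)) + 2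
          ≤ finrank K (LinearMap.ker B) + 2 := by
            exact Nat.add_le_add_right (Submodule.finrank_mono hker) 2
        _ ≤ finrank K (𝒜 1) := alt_ker_codim_two B halt hbc
        _ = n := hn.symm
    -- range of δ_a^0 is nonzero
    have h2 : 1 ≤ finrank K (LinearMap.range (gdelta 𝒜 a 0)) := by
      have hmem : a ∈ LinearMap.range (gdelta 𝒜 a 0) := by
        refine ⟨⟨1, SetLike.one_mem_graded 𝒜⟩, ?_⟩
        exact Subtype.ext (mul_one (a : R))
      have : Nontrivial (LinearMap.range (gdelta 𝒜 a 0)) :=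
        nontrivial_of_ne ⟨a, hmem⟩ 0 (fun h => ha (congrArg Subtype.val h))
      exact Module.finrank_pos (R := K) (M := LinearMap.range (gdelta 𝒜 a 0))
    rw [hdeq]
    omega
  -- conclude
  have hres : ∀ k, n - 2 ≤ k → k ≤ n → resSet 𝒜 1 k = {0} := by
    intro k hk1 hk2
    ext a
    simp only [Set.mem_singleton_iff]
    constructor
    · intro hmem
      by_contra ha
      have := hmain a ha
      have hka : k ≤ hdim 𝒜 a 1 := hmem
      omega
    · rintro rfl
      show k ≤ hdim 𝒜 (0 : 𝒜 1) 1
      rw [hd0]; exact hk2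
  exact ⟨hres _ le_rfl (by omega), hres _ (by omega) (by omega), hres _ (by omega) le_rfl⟩
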